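/- Let g : ℝ^d → ℝ be μ-strongly convex and consider the projected stochastic step x_{t+1} = Π_D(x_t - γ_t ∇̂_t) on a convex compact set D, where E[∇̂_t | F_t] = ∇g(x_t) and g is L-smooth. If γ_t ∈ (0, 1/L), then E[g(x_{t+1}) - g(x*)] ≤ E[ (γ_t/(2(1-γ_t L)))‖∇̂_t - ∇g(x_t)‖² + ((1-μγ_t)/(2γ_t))‖x* - x_t‖² - (1/(2γ_t))‖x* - x_{t+1}‖² ], where x* = argmin_{x∈D} g(x). -/

import Mathlib

open MeasureTheory RealInnerProductSpace
set_option linter.unusedSectionVars false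
set_option maxHeartbeats 1000000

section Aux
variable {E : Type*} [NormedAddCommGroup E] [InnerProductSpace ℝ E] [CompleteSpace E]

lemma aux_line_deriv (g : E → ℝ) (g' : E → E) (hgrad : ∀ x, HasGradientAt g (g' x) x)
    (x v : E) (t : ℝ) : HasDerivAt (fun s : ℝ => g (x + s • v)) ⟪g' (x + t • v), v⟫ t := by
  have h1 : HasDerivAt (fun s : ℝ => x + s • v) v t := by
    simpa using ((hasDerivAt_id t).smul_const v).const_add x
  have h2 := ((hgrad (x + t • v)).hasFDerivAt).comp_hasDerivAt t h1
  simpa [InnerProductSpace.toDual_apply_apply, Function.comp_def] using h2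

/-- quadratic expansion of the norm along a line -/
lemma aux_norm_line (x v : E) (t : ℝ) :
    ‖x + t • v‖ ^ 2 = ‖x‖ ^ 2 + 2 * (t * ⟪x, v⟫) + t ^ 2 * ‖v‖ ^ 2 := by
  rw [norm_add_sq_real, real_inner_smul_right, norm_smul]
  simp [mul_pow, sq_abs]

lemma aux_poly_deriv (c1 c2 c3 : ℝ) (t : ℝ) :
    HasDerivAt (fun s : ℝ => c1 + 2 * (s * c2) + s ^ 2 * c3) (2 * c2 + 2 * t * c3) t := by
  have h1 : HasDerivAt (fun s : ℝ => s * c2) c2 t := by simpa using (hasDerivAt_id t).mul_const c2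
  have h2 : HasDerivAt (fun s : ℝ => s ^ 2 * c3) (2 * t * c3) t := by
    simpa using (hasDerivAt_pow 2 t).mul_const c3
  exact (((hasDerivAt_const t c1).add (h1.const_mul 2)).add h2).congr_deriv (by ring)

/-- first-order lower bound from strong convexity -/
lemma aux_sc_lower (μ : ℝ) (g : E → ℝ) (g' : E → E)
    (hgrad : ∀ x, HasGradientAt g (g' x) x) (hsc : StrongConvexOn Set.univ μ g)
    (x y : E) : g x + ⟪g' x, y - x⟫ + μ / 2 * ‖y - x‖ ^ 2 ≤ g y := by
  set v := y - x with hv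
  have hconv : ConvexOn ℝ Set.univ fun z : E => g z - μ / 2 * ‖z‖ ^ 2 :=
    strongConvexOn_iff_convex.mp hsc
  set φ : ℝ → ℝ := fun t => g (x + t • v) - μ / 2 * (‖x‖ ^ 2 + 2 * (t * ⟪x, v⟫) + t ^ 2 * ‖v‖ ^ 2)
    with hφ
  have hφconv : ConvexOn ℝ Set.univ φ := by
    have := hconv.comp_affineMap (AffineMap.lineMap x (x + v) : ℝ →ᵃ[ℝ] E)
    have heq : ∀ t : ℝ, ((fun z : E => g z - μ / 2 * ‖z‖ ^ 2) ∘
        (AffineMap.lineMap x (x + v) : ℝ →ᵃ[ℝ] E)) t = φ t := by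
      intro t
      simp only [Function.comp_apply, AffineMap.lineMap_apply, vsub_eq_sub, vadd_eq_add,
        add_sub_cancel_left, hφ]
      rw [show t • v + x = x + t • v by abel, aux_norm_line]
    have hpre : (AffineMap.lineMap x (x + v) : ℝ →ᵃ[ℝ] E) ⁻¹' Set.univ = Set.univ := by simp
    rw [hpre] at this
    exact this.congr (fun t _ => heq t)
  have hder : HasDerivAt φ (⟪g' x, v⟫ - μ / 2 * (2 * ⟪x, v⟫)) 0 := by
    have h1 := aux_line_deriv g g' hgrad x v 0
    simp only [zero_smul, add_zero] at h1
    have h2 := (aux_poly_deriv (‖x‖ ^ 2) ⟪x, v⟫ (‖v‖ ^ 2) 0).const_mul (μ / 2)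
    simp only [mul_zero, zero_mul, add_zero] at h2
    exact h1.sub h2
  have hslope := hφconv.le_slope_of_hasDerivAt (Set.mem_univ (0:ℝ)) (Set.mem_univ (1:ℝ))
    zero_lt_one hder
  rw [slope_def_field] at hslope
  have hφ1 : φ 1 = g y - μ / 2 * (‖x‖ ^ 2 + 2 * ⟪x, v⟫ + ‖v‖ ^ 2) := by
    simp [hφ, hv]
  have hφ0 : φ 0 = g x - μ / 2 * ‖x‖ ^ 2 := by simp [hφ]
  have hnv : ‖y - x‖ ^ 2 = ‖v‖ ^ 2 := by rw [hv]
  rw [hφ1, hφ0] at hslope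
  nlinarith [hslope]

/-- first-order upper bound from smoothness -/
lemma aux_smooth_upper (L : ℝ) (g : E → ℝ) (g' : E → E)
    (hgrad : ∀ x, HasGradientAt g (g' x) x)
    (hsmooth : ∀ x y, ‖g' x - g' y‖ ≤ L * ‖x - y‖)
    (x y : E) : g y ≤ g x + ⟪g' x, y - x⟫ + L / 2 * ‖y - x‖ ^ 2 := by
  set v := y - x with hv
  set ψ : ℝ → ℝ := fun t => L / 2 * (‖x‖ ^ 2 + 2 * (t * ⟪x, v⟫) + t ^ 2 * ‖v‖ ^ 2) - g (x + t • v)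
    with hψ
  set ψ' : ℝ → ℝ := fun t => L / 2 * (2 * ⟪x, v⟫ + 2 * t * ‖v‖ ^ 2) - ⟪g' (x + t • v), v⟫
    with hψ'
  have hd : ∀ t, HasDerivAt ψ (ψ' t) t := fun t =>
    ((aux_poly_deriv (‖x‖ ^ 2) ⟪x, v⟫ (‖v‖ ^ 2) t).const_mul (L / 2)).sub
      (aux_line_deriv g g' hgrad x v t)
  have hmono : Monotone ψ' := by
    intro s t hst
    have hcs := real_inner_le_norm (g' (x + t • v) - g' (x + s • v)) v
    have hsm := hsmooth (x + t • v) (x + s • v)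
    have hdiff : (x + t • v) - (x + s • v) = (t - s) • v := by
      rw [sub_smul]; abel
    rw [hdiff, norm_smul, Real.norm_eq_abs, abs_of_nonneg (sub_nonneg.2 hst)] at hsm
    have hsplit : ⟪g' (x + t • v) - g' (x + s • v), v⟫
        = ⟪g' (x + t • v), v⟫ - ⟪g' (x + s • v), v⟫ := by rw [inner_sub_left]
    simp only [hψ']
    nlinarith [norm_nonneg v, norm_nonneg (g' (x + t • v) - g' (x + s • v))]
  have hconv : ConvexOn ℝ Set.univ ψ := by
    refine Monotone.convexOn_univ_of_deriv (fun t => (hd t).differentiableAt) ?_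
    intro s t hst
    rw [(hd s).deriv, (hd t).deriv]
    exact hmono hst
  have hslope := hconv.le_slope_of_hasDerivAt (Set.mem_univ (0:ℝ)) (Set.mem_univ (1:ℝ))
    zero_lt_one (hd 0)
  rw [slope_def_field] at hslope
  have hψ1 : ψ 1 = L / 2 * (‖x‖ ^ 2 + 2 * ⟪x, v⟫ + ‖v‖ ^ 2) - g y := by simp [hψ, hv]
  have hψ0 : ψ 0 = L / 2 * ‖x‖ ^ 2 - g x := by simp [hψ]
  have hψ'0 : ψ' 0 = L / 2 * (2 * ⟪x, v⟫) - ⟪g' x, v⟫ := by simp [hψ']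
  rw [hψ1, hψ0, hψ'0] at hslope
  have hnv : ‖y - x‖ ^ 2 = ‖v‖ ^ 2 := by rw [hv]
  nlinarith [hslope]

lemma aux_vi {D : Set E} (hDconv : Convex ℝ D) {u n : E} (hn : n ∈ D)
    (hproj : ∀ y ∈ D, ‖n - u‖ ≤ ‖y - u‖) : ∀ y ∈ D, ⟪u - n, y - n⟫ ≤ 0 := by
  haveI : Nonempty D := ⟨⟨n, hn⟩⟩
  have hbdd : BddBelow (Set.range fun w : D => ‖u - ↑w‖) := ⟨0, by rintro r ⟨w, rfl⟩; positivity⟩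
  have heq : ‖u - n‖ = ⨅ w : D, ‖u - ↑w‖ :=
    le_antisymm
      (le_ciInf fun w => by rw [norm_sub_rev u n, norm_sub_rev u (w:E)]; exact hproj w w.2)
      (ciInf_le hbdd ⟨n, hn⟩)
  exact (norm_eq_iInf_iff_real_inner_le_zero hDconv hn).1 heq

end Aux

/-- One-step descent bound for projected stochastic gradient with an unbiased estimator. -/
theorem stmt7 {d : ℕ} {Ω : Type*} [MeasurableSpace Ω]
    (P : Measure Ω) [IsProbabilityMeasure P]
    (μ L γ : ℝ) (hμ : 0 < μ) (hL : 0 < L) (hγ : γ ∈ Set.Ioo 0 (1 / L))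
    (D : Set (EuclideanSpace ℝ (Fin d))) (hDconv : Convex ℝ D) (hDcomp : IsCompact D)
    (hDne : D.Nonempty)
    (g : EuclideanSpace ℝ (Fin d) → ℝ)
    (g' : EuclideanSpace ℝ (Fin d) → EuclideanSpace ℝ (Fin d))
    (hgrad : ∀ x, HasGradientAt g (g' x) x)
    (hsc : StrongConvexOn Set.univ μ g)
    (hsmooth : ∀ x y, ‖g' x - g' y‖ ≤ L * ‖x - y‖)
    (xstar : EuclideanSpace ℝ (Fin d)) (hxs : xstar ∈ D) (hmin : IsMinOn g D xstar)
    (xt : EuclideanSpace ℝ (Fin d)) (hxt : xt ∈ D)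
    (est : Ω → EuclideanSpace ℝ (Fin d))
    (hunbiased : ∫ ω, est ω ∂P = g' xt)
    (xnext : Ω → EuclideanSpace ℝ (Fin d))
    (hnextD : ∀ ω, xnext ω ∈ D)
    (hproj : ∀ ω, ∀ y ∈ D, ‖xnext ω - (xt - γ • est ω)‖ ≤ ‖y - (xt - γ • est ω)‖)
    (hint1 : Integrable (fun ω => g (xnext ω)) P)
    (hint2 : Integrable (fun ω => ‖est ω - g' xt‖ ^ 2) P)
    (hint3 : Integrable (fun ω => ‖xstar - xnext ω‖ ^ 2) P) :
    ∫ ω, (g (xnext ω) - g xstar) ∂P ≤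
      ∫ ω, (γ / (2 * (1 - γ * L)) * ‖est ω - g' xt‖ ^ 2
        + (1 - μ * γ) / (2 * γ) * ‖xstar - xt‖ ^ 2
        - 1 / (2 * γ) * ‖xstar - xnext ω‖ ^ 2) ∂P := by
  obtain ⟨hγ0, hγ1⟩ := hγ
  have hγL : 0 < 1 - γ * L := by
    rw [lt_div_iff₀ hL] at hγ1; linarith
  -- the pointwise bound, up to the zero-mean cross term
  have hpt : ∀ ω, g (xnext ω) - g xstar ≤
      (γ / (2 * (1 - γ * L)) * ‖est ω - g' xt‖ ^ 2
        + (1 - μ * γ) / (2 * γ) * ‖xstar - xt‖ ^ 2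
        - 1 / (2 * γ) * ‖xstar - xnext ω‖ ^ 2)
      + ⟪g' xt - est ω, xt - xstar⟫ := by
    intro ω
    set G := g' xt with hG
    set n := xnext ω with hn
    set e := est ω with he
    -- strong convexity lower bound
    have h1 : g xt + ⟪G, xstar - xt⟫ + μ / 2 * ‖xstar - xt‖ ^ 2 ≤ g xstar :=
      aux_sc_lower μ g g' hgrad hsc xt xstar
    -- smoothness upper bound
    have h2 : g n ≤ g xt + ⟪G, n - xt⟫ + L / 2 * ‖n - xt‖ ^ 2 :=
      aux_smooth_upper L g g' hgrad hsmooth xt n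
    -- projection variational inequality
    have h3 : ⟪(xt - γ • e) - n, xstar - n⟫ ≤ 0 :=
      aux_vi hDconv (hnextD ω) (hproj ω) xstar hxs
    -- Young's inequality for the cross term
    have h4 : ⟪G - e, n - xt⟫ ≤ γ / (2 * (1 - γ * L)) * ‖e - G‖ ^ 2
        + (1 - γ * L) / (2 * γ) * ‖n - xt‖ ^ 2 := by
      have hcs := real_inner_le_norm (G - e) (n - xt)
      rw [norm_sub_rev G e] at hcs
      have key : 2 * γ * (1 - γ * L) * (‖e - G‖ * ‖n - xt‖) ≤
          γ ^ 2 * ‖e - G‖ ^ 2 + (1 - γ * L) ^ 2 * ‖n - xt‖ ^ 2 := by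
        nlinarith [sq_nonneg (γ * ‖e - G‖ - (1 - γ * L) * ‖n - xt‖)]
      calc ⟪G - e, n - xt⟫ ≤ ‖e - G‖ * ‖n - xt‖ := hcs
        _ ≤ (γ ^ 2 * ‖e - G‖ ^ 2 + (1 - γ * L) ^ 2 * ‖n - xt‖ ^ 2) / (2 * γ * (1 - γ * L)) := by
            rw [le_div_iff₀ (by positivity)]; linarith
        _ = γ / (2 * (1 - γ * L)) * ‖e - G‖ ^ 2 + (1 - γ * L) / (2 * γ) * ‖n - xt‖ ^ 2 := by
            field_simp
    -- three-point identity
    have hI1 : ‖xstar - xt‖ ^ 2 = ‖xstar - n‖ ^ 2 + 2 * ⟪xstar - n, n - xt⟫ + ‖n - xt‖ ^ 2 := by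
      rw [show xstar - xt = (xstar - n) + (n - xt) by abel, norm_add_sq_real]
    -- consequence of the projection inequality
    have hiii : ⟪e, n - xt⟫ + ⟪e, xt - xstar⟫ ≤
        (‖xstar - xt‖ ^ 2 - ‖xstar - n‖ ^ 2 - ‖n - xt‖ ^ 2) / (2 * γ) := by
      rw [le_div_iff₀ (by positivity : (0:ℝ) < 2 * γ)]
      have e1 : ⟪e, n - xt⟫ + ⟪e, xt - xstar⟫ = -⟪e, xstar - n⟫ := by
        simp only [inner_sub_right]; ring
      have e2 : ⟪(xt - γ • e) - n, xstar - n⟫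
          = ⟪xt - n, xstar - n⟫ - γ * ⟪e, xstar - n⟫ := by
        rw [show (xt - γ • e) - n = (xt - n) - γ • e by abel, inner_sub_left,
          real_inner_smul_left]
      have e3 : ⟪xstar - n, n - xt⟫ = -⟪xt - n, xstar - n⟫ := by
        rw [real_inner_comm, show n - xt = -(xt - n) by abel, inner_neg_left]
      nlinarith [h3, hI1, e1, e2, e3]
    have hsplit1 : ⟪G, n - xt⟫ = ⟪G - e, n - xt⟫ + ⟪e, n - xt⟫ := by
      rw [inner_sub_left]; ring
    have e4 : ⟪G - e, xt - xstar⟫ = -⟪G, xstar - xt⟫ - ⟪e, xt - xstar⟫ := by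
      simp only [inner_sub_left, inner_sub_right]; ring
    have ecoef : (1 - γ * L) / (2 * γ) * ‖n - xt‖ ^ 2
        + (‖xstar - xt‖ ^ 2 - ‖xstar - n‖ ^ 2 - ‖n - xt‖ ^ 2) / (2 * γ)
        + L / 2 * ‖n - xt‖ ^ 2 - μ / 2 * ‖xstar - xt‖ ^ 2
        = (1 - μ * γ) / (2 * γ) * ‖xstar - xt‖ ^ 2 - 1 / (2 * γ) * ‖xstar - n‖ ^ 2 := by
      field_simp; ring
    linarith [h1, h2, h4, hiii, hsplit1, e4, ecoef]
  -- integrability of both sides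
  have hFint : Integrable (fun ω => g (xnext ω) - g xstar) P := hint1.sub (integrable_const _)
  have hRint : Integrable (fun ω => γ / (2 * (1 - γ * L)) * ‖est ω - g' xt‖ ^ 2
      + (1 - μ * γ) / (2 * γ) * ‖xstar - xt‖ ^ 2
      - 1 / (2 * γ) * ‖xstar - xnext ω‖ ^ 2) P :=
    ((hint2.const_mul _).add (integrable_const _)).sub (hint3.const_mul _)
  by_cases hest : Integrable est P
  · -- the cross term has zero mean
    have hHeq : ∀ ω, ⟪g' xt - est ω, xt - xstar⟫
        = ⟪xt - xstar, g' xt⟫ - (innerSL ℝ (xt - xstar)) (est ω) := by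
      intro ω
      rw [innerSL_apply_apply, inner_sub_left, real_inner_comm (xt - xstar) (g' xt),
        real_inner_comm (xt - xstar) (est ω)]
    have hHint2 : Integrable (fun ω => (innerSL ℝ (xt - xstar)) (est ω)) P :=
      (innerSL ℝ (xt - xstar)).integrable_comp hest
    have hHint : Integrable (fun ω => ⟪g' xt - est ω, xt - xstar⟫) P := by
      simp only [hHeq]; exact (integrable_const _).sub hHint2
    have hHzero : ∫ ω, ⟪g' xt - est ω, xt - xstar⟫ ∂P = 0 := by
      simp only [hHeq]
      rw [integral_sub (integrable_const _) hHint2,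
        ContinuousLinearMap.integral_comp_comm _ hest, hunbiased, integral_const]
      simp only [measure_univ, probReal_univ, ENNReal.toReal_one, one_smul, innerSL_apply_apply, sub_self]
    calc ∫ ω, (g (xnext ω) - g xstar) ∂P
        ≤ ∫ ω, ((γ / (2 * (1 - γ * L)) * ‖est ω - g' xt‖ ^ 2
            + (1 - μ * γ) / (2 * γ) * ‖xstar - xt‖ ^ 2
            - 1 / (2 * γ) * ‖xstar - xnext ω‖ ^ 2)
          + ⟪g' xt - est ω, xt - xstar⟫) ∂P := integral_mono hFint (hRint.add hHint) hpt
      _ = _ := by rw [integral_add hRint hHint, hHzero, add_zero]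
  · -- degenerate case: the estimator is not integrable, so `g' xt = 0` and `xt = xstar`
    have hG0 : g' xt = 0 := by rw [← hunbiased, integral_undef hest]
    have hlow := aux_sc_lower μ g g' hgrad hsc xt xstar
    rw [hG0] at hlow
    simp only [inner_zero_left, add_zero] at hlow
    have hup : g xstar ≤ g xt := hmin hxt
    have hxx : xt - xstar = 0 := by
      have hsq : ‖xstar - xt‖ ^ 2 ≤ 0 := by nlinarith
      have h0 : ‖xstar - xt‖ = 0 := by nlinarith [norm_nonneg (xstar - xt)]
      have hxy := sub_eq_zero.mp (norm_eq_zero.mp h0)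
      rw [hxy, sub_self]
    refine integral_mono hFint hRint (fun ω => ?_)
    have hb := hpt ω
    rw [hxx, inner_zero_right] at hb
    linarith
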